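/- Let y ∈ ℝ^N, λ > 0, α ≥ 0, and define F(x) = ‖x‖₁ - α‖x‖₂ + (1/(2λ))‖x - y‖₂². If ‖y‖_∞ > λ, then the vector x* = z(‖z‖₂ + αλ)/‖z‖₂, where z = S₁(y, λ) is the componentwise soft-shrinkage of y with threshold λ (S₁(y,λ)_i = sign(y_i)·max(|y_i|-λ, 0)), is a global minimizer of F. -/

import Mathlib

open Finset Filter Set
open scoped RealInnerProductSpace

noncomputable def norm1 {N : ℕ} (x : EuclideanSpace ℝ (Fin N)) : ℝ := ∑ i, |x i|

noncomputable def normInf {N : ℕ} (x : EuclideanSpace ℝ (Fin N)) : ℝ := ⨆ i, |x i|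

noncomputable def Fobj {N : ℕ} (a lam : ℝ) (y x : EuclideanSpace ℝ (Fin N)) : ℝ :=
  norm1 x - a * ‖x‖ + 1 / (2 * lam) * ‖x - y‖ ^ 2

/-- Soft-thresholding operator. -/
noncomputable def soft {N : ℕ} (lam : ℝ) (y : EuclideanSpace ℝ (Fin N)) :
    EuclideanSpace ℝ (Fin N) := WithLp.toLp 2 (fun i => Real.sign (y i) * max (|y i| - lam) 0)

lemma inner_sum' {N : ℕ} (u v : EuclideanSpace ℝ (Fin N)) : ⟪u, v⟫ = ∑ i, u i * v i := by
  simp [PiLp.inner_apply, RCLike.inner_apply, mul_comm]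

lemma norm_sq_sum' {N : ℕ} (x : EuclideanSpace ℝ (Fin N)) : ‖x‖ ^ 2 = ∑ i, (x i) ^ 2 := by
  rw [EuclideanSpace.norm_eq, Real.sq_sqrt (Finset.sum_nonneg fun i _ => sq_nonneg _)]
  simp [Real.norm_eq_abs, sq_abs]

noncomputable def absv {N : ℕ} (x : EuclideanSpace ℝ (Fin N)) : EuclideanSpace ℝ (Fin N) :=
  WithLp.toLp 2 (fun i => |x i|)

lemma abs_soft {N : ℕ} {lam : ℝ} (hlam : 0 < lam) (y : EuclideanSpace ℝ (Fin N)) (i : Fin N) :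
    |soft lam y i| = max (|y i| - lam) 0 := by
  show |Real.sign (y i) * max (|y i| - lam) 0| = max (|y i| - lam) 0
  rcases lt_trichotomy (y i) 0 with h | h | h
  · rw [Real.sign_of_neg h, abs_mul, abs_neg, abs_one, one_mul,
      abs_of_nonneg (le_max_right _ _)]
  · rw [h, Real.sign_zero, zero_mul, abs_zero]
    exact (max_eq_right (by linarith)).symm
  · rw [Real.sign_of_pos h, abs_mul, abs_one, one_mul, abs_of_nonneg (le_max_right _ _)]

lemma soft_mul_y {N : ℕ} {lam : ℝ} (hlam : 0 < lam) (y : EuclideanSpace ℝ (Fin N)) (i : Fin N) :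
    soft lam y i * y i = (soft lam y i) ^ 2 + lam * |soft lam y i| := by
  have habs := abs_soft hlam y i
  rcases le_or_gt (|y i|) lam with h | h
  · have hm0 : soft lam y i = 0 := by
      have h0 : |soft lam y i| = 0 := by
        rw [habs, max_eq_right (by linarith)]
      exact abs_eq_zero.mp h0
    rw [hm0]; simp
  · have hm : max (|y i| - lam) 0 = |y i| - lam := max_eq_left (by linarith)
    have hy0 : y i ≠ 0 := by
      intro h0; rw [h0] at h; simp at h; linarith
    have hsoft : soft lam y i = Real.sign (y i) * (|y i| - lam) := by
      show Real.sign (y i) * max (|y i| - lam) 0 = _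
      rw [hm]
    rw [hm] at habs
    have hsq : (soft lam y i) ^ 2 = (|y i| - lam) ^ 2 := by
      rw [← sq_abs, habs]
    have hsy : Real.sign (y i) * y i = |y i| := by
      rcases lt_trichotomy (y i) 0 with h' | h' | h'
      · rw [Real.sign_of_neg h', abs_of_neg h']; ring
      · exact absurd h' hy0
      · rw [Real.sign_of_pos h', abs_of_pos h']; ring
    rw [hsq, habs, hsoft]
    have hfin : Real.sign (y i) * (|y i| - lam) * y i = (|y i| - lam) * |y i| := by
      rw [← hsy]; ring
    rw [hfin]; ring

theorem stmt0 {N : ℕ} (a lam : ℝ) (hlam : 0 < lam) (ha : 0 ≤ a)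
    (y : EuclideanSpace ℝ (Fin N)) (hy : lam < normInf y) :
    IsMinOn (Fobj a lam y) Set.univ
      (((‖soft lam y‖ + a * lam) / ‖soft lam y‖) • soft lam y) := by
  set z : EuclideanSpace ℝ (Fin N) := soft lam y with hzdef
  -- positivity of ‖z‖
  have hNe : Nonempty (Fin N) := by
    by_contra h
    rw [not_nonempty_iff] at h
    have : normInf y = 0 := by
      unfold normInf
      exact Real.iSup_of_isEmpty _
    rw [this] at hy; linarith
  obtain ⟨i0, hi0⟩ : ∃ i, lam < |y i| := by
    have := hy
    unfold normInf at this
    exact exists_lt_of_lt_ciSup this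
  have hzi0 : |z i0| = |y i0| - lam := by
    rw [hzdef, abs_soft hlam, max_eq_left (by linarith)]
  have hz0 : z ≠ 0 := by
    intro h
    have : z i0 = 0 := by rw [h]; rfl
    rw [this] at hzi0; simp at hzi0; linarith
  have hs : (0:ℝ) < ‖z‖ := norm_pos_iff.mpr hz0
  set s : ℝ := ‖z‖ with hsdef
  set c : ℝ := (s + a * lam) / s with hcdef
  have hcpos : 0 < c := by
    apply div_pos _ hs
    nlinarith
  have hcs : c * s = s + a * lam := by
    rw [hcdef, div_mul_cancel₀ _ (ne_of_gt hs)]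
  -- inner product identity for z
  have hzy : ⟪z, y⟫ = s ^ 2 + lam * norm1 z := by
    rw [inner_sum', hsdef, norm_sq_sum', norm1, Finset.mul_sum, ← Finset.sum_add_distrib]
    exact Finset.sum_congr rfl fun i _ => soft_mul_y hlam y i
  -- key inequality: ⟪x, y⟫ - lam * norm1 x ≤ ‖x‖ * s
  have hkey : ∀ x : EuclideanSpace ℝ (Fin N), ⟪x, y⟫ - lam * norm1 x ≤ ‖x‖ * s := by
    intro x
    have h1 : ⟪x, y⟫ - lam * norm1 x ≤ ∑ i, |x i| * |z i| := by
      rw [inner_sum', norm1, Finset.mul_sum, ← Finset.sum_sub_distrib]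
      apply Finset.sum_le_sum
      intro i _
      have habs : |z i| = max (|y i| - lam) 0 := abs_soft hlam y i
      have h2 : x i * y i ≤ |x i| * |y i| := by
        calc x i * y i ≤ |x i * y i| := le_abs_self _
        _ = |x i| * |y i| := abs_mul _ _
      have h3 : |y i| - lam ≤ |z i| := by rw [habs]; exact le_max_left _ _
      nlinarith [abs_nonneg (x i)]
    have h2 : ∑ i, |x i| * |z i| ≤ ‖x‖ * s := by
      have hu : ‖absv x‖ = ‖x‖ := by
        rw [EuclideanSpace.norm_eq, EuclideanSpace.norm_eq]
        congr 1
        exact Finset.sum_congr rfl fun i _ => by simp [absv]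
      have hv : ‖absv z‖ = ‖z‖ := by
        rw [EuclideanSpace.norm_eq, EuclideanSpace.norm_eq]
        congr 1
        exact Finset.sum_congr rfl fun i _ => by simp [absv]
      calc ∑ i, |x i| * |z i| = ⟪absv x, absv z⟫ := by
            rw [inner_sum']; exact Finset.sum_congr rfl fun i _ => rfl
        _ ≤ ‖absv x‖ * ‖absv z‖ := real_inner_le_norm _ _
        _ = ‖x‖ * s := by rw [hu, hv, hsdef]
    linarith
  -- value at the candidate minimizer
  set xs : EuclideanSpace ℝ (Fin N) := c • z with hxsdef
  have hn1xs : norm1 xs = c * norm1 z := by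
    rw [norm1, norm1, Finset.mul_sum]
    apply Finset.sum_congr rfl
    intro i _
    have : xs i = c * z i := rfl
    rw [this, abs_mul, abs_of_pos hcpos]
  have hnxs : ‖xs‖ = c * s := by
    rw [hxsdef, norm_smul, Real.norm_eq_abs, abs_of_pos hcpos, hsdef]
  have hixs : ⟪xs, y⟫ = c * (s ^ 2 + lam * norm1 z) := by
    rw [hxsdef, real_inner_smul_left, hzy]
  have hFxs : Fobj a lam y xs = ‖y‖ ^ 2 / (2 * lam) - (s + a * lam) ^ 2 / (2 * lam) := by
    unfold Fobj
    rw [norm_sub_sq_real, hn1xs, hnxs, hixs]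
    have hs' : s ≠ 0 := ne_of_gt hs
    field_simp [hcdef]
    linear_combination (c * s - (s + a * lam)) * hcs
  -- conclude
  rw [isMinOn_iff]
  intro x _
  rw [hFxs]
  unfold Fobj
  rw [norm_sub_sq_real]
  have hk := hkey x
  have hr : (0:ℝ) ≤ ‖x‖ := norm_nonneg x
  rw [← sub_nonneg]
  have hrw : norm1 x - a * ‖x‖ + 1 / (2 * lam) * (‖x‖ ^ 2 - 2 * ⟪x, y⟫ + ‖y‖ ^ 2) -
      (‖y‖ ^ 2 / (2 * lam) - (s + a * lam) ^ 2 / (2 * lam)) =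
      (2 * lam * (norm1 x - a * ‖x‖) + ‖x‖ ^ 2 - 2 * ⟪x, y⟫ + (s + a * lam) ^ 2) /
        (2 * lam) := by
    field_simp
    ring
  rw [hrw]
  apply div_nonneg _ (by linarith)
  nlinarith [sq_nonneg (‖x‖ - (s + a * lam))]
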